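/- Every element of G₂ has a unique expression of the form w·βⁿ, where n ∈ ℤ and w is an element of the subgroup of G₂ generated by α and γ; moreover the element w of that subgroup and the integer n are uniquely determined. -/

import Mathlib

/-- The group `G₂ = ⟨α, β, γ ∣ αβα⁻¹ = β⁻¹, βγβ⁻¹ = γ⁻¹⟩`, as the presented
group on three generators with relators `αβα⁻¹β` and `βγβ⁻¹γ`. -/
abbrev G₂ : Type :=
  PresentedGroup ({FreeGroup.of 0 * FreeGroup.of 1 * (FreeGroup.of 0)⁻¹ * FreeGroup.of 1,
    FreeGroup.of 1 * FreeGroup.of 2 * (FreeGroup.of 1)⁻¹ * FreeGroup.of 2} :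
    Set (FreeGroup (Fin 3)))

namespace G2Aux

/-- The relator set. -/
abbrev rels : Set (FreeGroup (Fin 3)) :=
  {FreeGroup.of 0 * FreeGroup.of 1 * (FreeGroup.of 0)⁻¹ * FreeGroup.of 1,
    FreeGroup.of 1 * FreeGroup.of 2 * (FreeGroup.of 1)⁻¹ * FreeGroup.of 2}

noncomputable abbrev a : G₂ := PresentedGroup.of 0
noncomputable abbrev b : G₂ := PresentedGroup.of 1
noncomputable abbrev c : G₂ := PresentedGroup.of 2

lemma rel1 : a * b * a⁻¹ * b = 1 := by
  have h : ((PresentedGroup.mk rels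
      (FreeGroup.of 0 * FreeGroup.of 1 * (FreeGroup.of 0)⁻¹ * FreeGroup.of 1)) : G₂) = 1 :=
    (QuotientGroup.eq_one_iff _).mpr
      (Subgroup.subset_normalClosure (Set.mem_insert _ _))
  simpa [PresentedGroup.of, map_mul, map_inv] using h

lemma rel2 : b * c * b⁻¹ * c = 1 := by
  have h : ((PresentedGroup.mk rels
      (FreeGroup.of 1 * FreeGroup.of 2 * (FreeGroup.of 1)⁻¹ * FreeGroup.of 2)) : G₂) = 1 :=
    (QuotientGroup.eq_one_iff _).mpr
      (Subgroup.subset_normalClosure (Set.mem_insert_of_mem _ rfl))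
  simpa [PresentedGroup.of, map_mul, map_inv] using h

lemma conj_ab : a * b * a⁻¹ = b⁻¹ := by
  have := rel1
  rw [mul_eq_one_iff_eq_inv] at this
  exact this

lemma conj_bc : b * c * b⁻¹ = c⁻¹ := by
  have := rel2
  rw [mul_eq_one_iff_eq_inv] at this
  exact this

lemma conj_ab_zpow (n : ℤ) : a * b ^ n * a⁻¹ = b ^ (-n) := by
  rw [← conj_zpow, conj_ab, inv_zpow, zpow_neg]

lemma zpow_b_a (n : ℤ) : b ^ n * a = a * b ^ (-n) := by
  have h := conj_ab_zpow (-n)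
  rw [neg_neg] at h
  rw [← h]
  group

lemma zpow_b_a_inv (n : ℤ) : b ^ n * a⁻¹ = a⁻¹ * b ^ (-n) := by
  have h := conj_ab_zpow n
  rw [← h]
  group

lemma conj_binv_c : b⁻¹ * c * b = c⁻¹ := by
  have h := conj_bc
  have h2 : c = b⁻¹ * c⁻¹ * b := by rw [← h]; group
  calc b⁻¹ * c * b = (b⁻¹ * c⁻¹ * b)⁻¹ := by group
    _ = c⁻¹ := by rw [← h2]

lemma conj_c_zpow (n : ℤ) : b ^ n * c * b ^ (-n) = c ∨ b ^ n * c * b ^ (-n) = c⁻¹ := by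
  induction n using Int.induction_on with
  | zero => left; simp
  | succ k ih =>
    have e : b ^ ((k : ℤ) + 1) * c * b ^ (-((k : ℤ) + 1)) =
        b * (b ^ (k : ℤ) * c * b ^ (-(k : ℤ))) * b⁻¹ := by
      rw [zpow_add_one, neg_add, zpow_add, zpow_neg_one]
      group
    rcases ih with h | h
    · right; rw [e, h]; exact conj_bc
    · left; rw [e, h]
      calc b * c⁻¹ * b⁻¹ = (b * c * b⁻¹)⁻¹ := by group
        _ = (c⁻¹)⁻¹ := by rw [conj_bc]
        _ = c := inv_inv c
  | pred k ih =>
    have e : b ^ (-(k : ℤ) - 1) * c * b ^ (-(-(k : ℤ) - 1)) =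
        b⁻¹ * (b ^ (-(k : ℤ)) * c * b ^ (-(-(k : ℤ)))) * b := by
      rw [sub_eq_add_neg, zpow_add, neg_add, neg_neg, neg_neg, zpow_add, zpow_neg_one]
      group
    rcases ih with h | h
    · right; rw [e, h]; exact conj_binv_c
    · left; rw [e, h]
      calc b⁻¹ * c⁻¹ * b = (b⁻¹ * c * b)⁻¹ := by group
        _ = (c⁻¹)⁻¹ := by rw [conj_binv_c]
        _ = c := inv_inv c

/-- The images of the generators in `Perm ℤ`. -/
noncomputable def f : Fin 3 → Equiv.Perm ℤ := ![Equiv.neg ℤ, Equiv.addRight 1, 1]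

lemma f_rels : ∀ r ∈ rels, FreeGroup.lift f r = 1 := by
  intro r hr
  rcases hr with h | h <;> subst h <;>
    · ext x
      simp [f, Equiv.Perm.mul_apply, Equiv.Perm.inv_def]
      try omega

/-- The homomorphism `G₂ →* Perm ℤ` used to separate the `β`-exponent. -/
noncomputable def ρ : G₂ →* Equiv.Perm ℤ := PresentedGroup.toGroup f_rels

lemma ρ_a : ρ a = Equiv.neg ℤ := PresentedGroup.toGroup.of f_rels
lemma ρ_b : ρ b = Equiv.addRight 1 := PresentedGroup.toGroup.of f_rels
lemma ρ_c : ρ c = 1 := PresentedGroup.toGroup.of f_rels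

lemma sign_inv : ∀ h ∈ Subgroup.closure ({a, c} : Set G₂),
    ∀ x : ℤ, ρ h x = x ∨ ρ h x = -x := by
  intro h hh
  induction hh using Subgroup.closure_induction with
  | mem g hg =>
    rcases hg with h | h <;> subst h <;> intro x
    · right; rw [ρ_a]; simp
    · left; rw [ρ_c]; rfl
  | one => intro x; left; simp
  | mul g₁ g₂ _ _ ih₁ ih₂ =>
    intro x
    rw [map_mul, Equiv.Perm.mul_apply]
    rcases ih₂ x with h2 | h2 <;> rw [h2]
    · exact ih₁ x
    · rcases ih₁ (-x) with h1 | h1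
      · right; rw [h1]
      · left; rw [h1, neg_neg]
  | inv g hg ih =>
    intro x
    have hx : ρ g (ρ g⁻¹ x) = x := by
      rw [map_inv]
      simp
    rcases ih (ρ g⁻¹ x) with h1 | h1 <;> rw [hx] at h1
    · left; omega
    · right; omega

lemma b_zpow_mem {n : ℤ} (hn : b ^ n ∈ Subgroup.closure ({a, c} : Set G₂)) : n = 0 := by
  have h := sign_inv _ hn 0
  have hb : ρ (b ^ n) 0 = n := by
    have hz : ∀ m : ℤ, (Equiv.addRight (1:ℤ)) ^ m = Equiv.addRight m := by
      intro m
      induction m using Int.induction_on with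
      | zero => ext x; simp
      | succ k ih => ext x; rw [zpow_add_one, ih]; simp [Equiv.Perm.mul_apply]; ring
      | pred k ih => ext x; rw [zpow_sub_one, ih]; simp [Equiv.Perm.mul_apply, Equiv.Perm.inv_def]; ring
    rw [map_zpow, ρ_b, hz]
    simp
  omega

/-- Existence of the normal form. -/
lemma exists_nf (g : G₂) :
    ∃ w ∈ Subgroup.closure ({a, c} : Set G₂), ∃ n : ℤ, g = w * b ^ n := by
  set H := Subgroup.closure ({a, c} : Set G₂) with hH
  have ha : a ∈ H := Subgroup.subset_closure (Set.mem_insert _ _)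
  have hc : c ∈ H := Subgroup.subset_closure (Set.mem_insert_of_mem _ rfl)
  set S : Set G₂ := {g | ∃ w ∈ H, ∃ n : ℤ, g = w * b ^ n} with hS
  -- S is closed under right multiplication by the six generators
  have stepA : ∀ g ∈ S, g * a ∈ S := by
    rintro g ⟨w, hw, n, rfl⟩
    exact ⟨w * a, mul_mem hw ha, -n, by rw [mul_assoc, zpow_b_a, ← mul_assoc]⟩
  have stepA' : ∀ g ∈ S, g * a⁻¹ ∈ S := by
    rintro g ⟨w, hw, n, rfl⟩
    exact ⟨w * a⁻¹, mul_mem hw (inv_mem ha), -n, by rw [mul_assoc, zpow_b_a_inv, ← mul_assoc]⟩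
  have stepB : ∀ g ∈ S, g * b ∈ S := by
    rintro g ⟨w, hw, n, rfl⟩
    exact ⟨w, hw, n + 1, by rw [zpow_add_one, mul_assoc]⟩
  have stepB' : ∀ g ∈ S, g * b⁻¹ ∈ S := by
    rintro g ⟨w, hw, n, rfl⟩
    exact ⟨w, hw, n - 1, by rw [zpow_sub_one, mul_assoc]⟩
  have stepC : ∀ g ∈ S, g * c ∈ S := by
    rintro g ⟨w, hw, n, rfl⟩
    have e : w * b ^ n * c = w * (b ^ n * c * b ^ (-n)) * b ^ n := by group
    rcases conj_c_zpow n with h | h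
    · exact ⟨w * c, mul_mem hw hc, n, by rw [e, h]⟩
    · exact ⟨w * c⁻¹, mul_mem hw (inv_mem hc), n, by rw [e, h]⟩
  have stepC' : ∀ g ∈ S, g * c⁻¹ ∈ S := by
    rintro g ⟨w, hw, n, rfl⟩
    have e : w * b ^ n * c⁻¹ = w * (b ^ n * c * b ^ (-n))⁻¹ * b ^ n := by group
    rcases conj_c_zpow n with h | h
    · exact ⟨w * c⁻¹, mul_mem hw (inv_mem hc), n, by rw [e, h]⟩
    · exact ⟨w * c, mul_mem hw hc, n, by rw [e, h, inv_inv]⟩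
  -- G₂ is generated by a, b, c
  have hrange : Set.range (PresentedGroup.of : Fin 3 → G₂) = {a, b, c} := by
    ext x
    constructor
    · rintro ⟨i, rfl⟩
      fin_cases i
      · exact Set.mem_insert _ _
      · exact Set.mem_insert_of_mem _ (Set.mem_insert _ _)
      · exact Set.mem_insert_of_mem _ (Set.mem_insert_of_mem _ rfl)
    · rintro (rfl | rfl | rfl)
      exacts [⟨0, rfl⟩, ⟨1, rfl⟩, ⟨2, rfl⟩]
  have htop : Subgroup.closure ({a, b, c} : Set G₂) = ⊤ := by
    rw [← hrange]; exact PresentedGroup.closure_range_of rels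
  have hmem : g ∈ Submonoid.closure (({a, b, c} : Set G₂) ∪ ({a, b, c} : Set G₂)⁻¹) := by
    have : g ∈ (Subgroup.closure ({a, b, c} : Set G₂)).toSubmonoid := by
      rw [htop]; trivial
    rwa [Subgroup.closure_toSubmonoid] at this
  -- main induction
  have key : ∀ h ∈ Submonoid.closure (({a, b, c} : Set G₂) ∪ ({a, b, c} : Set G₂)⁻¹),
      ∀ g ∈ S, g * h ∈ S := by
    intro h hh
    induction hh using Submonoid.closure_induction with
    | mem x hx =>
      rcases hx with hx | hx
      · rcases hx with rfl | rfl | rfl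
        exacts [stepA, stepB, stepC]
      · rw [Set.mem_inv] at hx
        rcases hx with h1 | h1 | h1
        · have hx2 : x = a⁻¹ := inv_eq_iff_eq_inv.mp h1
          subst hx2; exact stepA'
        · have hx2 : x = b⁻¹ := inv_eq_iff_eq_inv.mp h1
          subst hx2; exact stepB'
        · rw [Set.mem_singleton_iff] at h1
          have hx2 : x = c⁻¹ := inv_eq_iff_eq_inv.mp h1
          subst hx2; exact stepC' 
    | one => intro g hg; simpa using hg
    | mul x y _ _ ihx ihy =>
      intro g hg
      rw [← mul_assoc]
      exact ihy _ (ihx g hg)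
  have h1S : (1 : G₂) ∈ S := ⟨1, one_mem H, 0, by simp⟩
  have := key g hmem 1 h1S
  simpa [hS] using this

end G2Aux

/-- Every element of `G₂` is uniquely of the form `w·βⁿ` with `w` in the
subgroup generated by `α` and `γ` and `n ∈ ℤ`. -/
theorem G₂_normal_form (g : G₂) :
    ∃! wn : (Subgroup.closure ({PresentedGroup.of 0, PresentedGroup.of 2} : Set G₂)) × ℤ,
      g = (wn.1 : G₂) * (PresentedGroup.of 1 : G₂) ^ wn.2 := by
  obtain ⟨w, hw, n, rfl⟩ := G2Aux.exists_nf g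
  refine ⟨(⟨w, hw⟩, n), rfl, ?_⟩
  rintro ⟨w', n'⟩ h
  simp only at h
  have hb : G2Aux.b ^ (n' - n) = (w' : G₂)⁻¹ * w := by
    have e : (w' : G₂)⁻¹ * (w * G2Aux.b ^ n) * (G2Aux.b ^ n)⁻¹ = (w' : G₂)⁻¹ * w := by group
    rw [h] at e
    rw [zpow_sub, ← e]
    group
  have hmem : G2Aux.b ^ (n' - n) ∈ Subgroup.closure ({G2Aux.a, G2Aux.c} : Set G₂) := by
    rw [hb]
    exact mul_mem (inv_mem w'.2) hw
  have hn : n' = n := by have := G2Aux.b_zpow_mem hmem; omega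
  subst hn
  have hw' : (w' : G₂) = w := by
    have := h
    exact (mul_right_cancel this.symm)
  exact Prod.ext (Subtype.ext hw') rfl
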